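/- Let d ≥ 1 and n ≥ 1 be integers and set h = 1/(n+1). For every multi-index k ∈ {1,…,n}^d, with λ_k = π² ∑_{j=1}^d k_j² and λ_k^{(h)} = (4/h²) ∑_{j=1}^d sin²(k_j π h / 2), one has 0 ≤ λ_k − λ_k^{(h)} ≤ (h²/12) · λ_k². In particular |λ_k^{(h)} − λ_k| ≤ C h² λ_k² with C = 1/12. -/

import Mathlib

noncomputable section

lemma sub_cube_le_sin {x : ℝ} (hx : 0 ≤ x) : x - x ^ 3 / 6 ≤ Real.sin x := by
  have key : MonotoneOn (fun t : ℝ => Real.sin t - t + t ^ 3 / 6) (Set.Ici 0) := by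
    have hderiv : ∀ y : ℝ, HasDerivAt (fun t : ℝ => Real.sin t - t + t ^ 3 / 6)
        (Real.cos y - 1 + y ^ 2 / 2) y := by
      intro y
      have h1 := ((Real.hasDerivAt_sin y).sub (hasDerivAt_id y)).add
        ((hasDerivAt_pow 3 y).div_const 6)
      refine HasDerivAt.congr_deriv h1 ?_
      norm_num
      ring
    apply monotoneOn_of_deriv_nonneg (convex_Ici 0)
    · exact (Continuous.continuousOn (by continuity))
    · intro y _
      exact (hderiv y).differentiableAt.differentiableWithinAt
    · intro y _
      rw [(hderiv y).deriv]
      have := Real.one_sub_sq_div_two_le_cos (x := y)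
      linarith
  have h0 : (fun t : ℝ => Real.sin t - t + t ^ 3 / 6) 0 ≤
      (fun t : ℝ => Real.sin t - t + t ^ 3 / 6) x :=
    key (Set.self_mem_Ici) (Set.mem_Ici.2 hx) hx
  simp at h0
  linarith

lemma sq_sub_sin_sq_le {x : ℝ} (hx : 0 ≤ x) :
    x ^ 2 - Real.sin x ^ 2 ≤ x ^ 4 / 3 ∧ 0 ≤ x ^ 2 - Real.sin x ^ 2 := by
  have h1 : Real.sin x ≤ x := Real.sin_le hx
  have h2 := sub_cube_le_sin hx
  have h3 : -x ≤ Real.sin x := by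
    have := Real.abs_sin_le_abs (x := x)
    rw [abs_of_nonneg hx] at this
    have := neg_abs_le (Real.sin x)
    linarith
  constructor
  · nlinarith [sq_nonneg (x - Real.sin x), sq_nonneg x]
  · nlinarith

/-- The Dirichlet eigenvalue `λ_k = π² ∑_j k_j²` on the cube `(0,1)^d`. -/
def lamK (d : ℕ) (k : Fin d → ℕ) : ℝ := Real.pi ^ 2 * ∑ j, (k j : ℝ) ^ 2

/-- The eigenvalue `λ_k^{(h)} = (4/h²) ∑_j sin²(k_j π h / 2)` of the discretised
Dirichlet Laplacian with mesh size `h = 1/(n+1)`. -/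
def lamKh (d n : ℕ) (k : Fin d → ℕ) : ℝ :=
  4 / (1 / (n + 1 : ℝ)) ^ 2 *
    ∑ j, Real.sin ((k j : ℝ) * Real.pi * (1 / (n + 1 : ℝ)) / 2) ^ 2

/-- **Second-order convergence of the discrete eigenvalues.**
For `k ∈ {1,…,n}^d` and `h = 1/(n+1)`,
`0 ≤ λ_k - λ_k^{(h)} ≤ (h²/12) λ_k²`, and in particular
`|λ_k^{(h)} - λ_k| ≤ (1/12) h² λ_k²`. -/
theorem stmt_11 (d n : ℕ) (hd : 1 ≤ d) (hn : 1 ≤ n)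
    (k : Fin d → ℕ) (hk : ∀ j, 1 ≤ k j ∧ k j ≤ n) :
    (0 ≤ lamK d k - lamKh d n k ∧
      lamK d k - lamKh d n k ≤ (1 / (n + 1 : ℝ)) ^ 2 / 12 * lamK d k ^ 2) ∧
    |lamKh d n k - lamK d k| ≤ 1 / 12 * (1 / (n + 1 : ℝ)) ^ 2 * lamK d k ^ 2 := by
  have hpi := Real.pi_pos
  set h : ℝ := 1 / ((n : ℝ) + 1) with hhdef
  have hpos : 0 < h := by positivity
  have hne : h ≠ 0 := hpos.ne'
  set x : Fin d → ℝ := fun j => (k j : ℝ) * Real.pi * h / 2 with hxdef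
  have hx0 : ∀ j, 0 ≤ x j := fun j => by
    have : (0:ℝ) ≤ (k j : ℝ) := Nat.cast_nonneg _
    simp only [hxdef]; positivity
  set S : ℝ := ∑ j, (k j : ℝ) ^ 2 with hSdef
  set T : ℝ := ∑ j, ((k j : ℝ) ^ 2) ^ 2 with hTdef
  have hId : lamK d k = 4 / h ^ 2 * ∑ j, (x j) ^ 2 := by
    unfold lamK
    rw [← hSdef, Finset.mul_sum, ← Finset.mul_sum]
    have : ∑ j, (x j) ^ 2 = (Real.pi * h / 2) ^ 2 * S := by
      rw [hSdef, Finset.mul_sum]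
      refine Finset.sum_congr rfl fun j _ => ?_
      simp only [hxdef]; ring
    rw [this]
    field_simp
    ring
  have hdiff : lamK d k - lamKh d n k = 4 / h ^ 2 * ∑ j, ((x j) ^ 2 - Real.sin (x j) ^ 2) := by
    rw [hId]
    unfold lamKh
    rw [Finset.sum_sub_distrib, mul_sub]
  have hlow : 0 ≤ ∑ j, ((x j) ^ 2 - Real.sin (x j) ^ 2) :=
    Finset.sum_nonneg fun j _ => (sq_sub_sin_sq_le (hx0 j)).2
  have hup : ∑ j, ((x j) ^ 2 - Real.sin (x j) ^ 2) ≤ (Real.pi * h / 2) ^ 4 / 3 * T := by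
    refine (Finset.sum_le_sum fun j _ => (sq_sub_sin_sq_le (hx0 j)).1).trans_eq ?_
    rw [hTdef, Finset.mul_sum]
    refine Finset.sum_congr rfl fun j _ => ?_
    simp only [hxdef]; ring
  have hTS : T ≤ S ^ 2 :=
    Finset.sum_sq_le_sq_sum_of_nonneg fun j _ => by positivity
  have h0 : 0 ≤ lamK d k - lamKh d n k := by
    rw [hdiff]; positivity
  have hu : lamK d k - lamKh d n k ≤ h ^ 2 / 12 * lamK d k ^ 2 := by
    rw [hdiff]
    calc 4 / h ^ 2 * ∑ j, ((x j) ^ 2 - Real.sin (x j) ^ 2)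
        ≤ 4 / h ^ 2 * ((Real.pi * h / 2) ^ 4 / 3 * T) := by
          exact mul_le_mul_of_nonneg_left hup (by positivity)
      _ = h ^ 2 * Real.pi ^ 4 / 12 * T := by field_simp; ring
      _ ≤ h ^ 2 * Real.pi ^ 4 / 12 * S ^ 2 := by
          exact mul_le_mul_of_nonneg_left hTS (by positivity)
      _ = h ^ 2 / 12 * lamK d k ^ 2 := by unfold lamK; rw [← hSdef]; ring
  refine ⟨⟨h0, hu⟩, ?_⟩
  rw [abs_sub_comm, abs_of_nonneg h0]
  calc lamK d k - lamKh d n k ≤ h ^ 2 / 12 * lamK d k ^ 2 := hu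
    _ = 1 / 12 * h ^ 2 * lamK d k ^ 2 := by ring

end
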